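/- The nomination probability q_r = Σ_{y=1}^{⌊k_q⌋} P[Y = y | R = r] + (k_q − ⌊k_q⌋)·P[Y = ⌊k_q⌋+1 | R = r] is non-increasing in r, where k_q = (k/n)·m. -/

import Mathlib

/-- The pool-position probability P[Y = y | R = r]. -/
noncomputable def poolProb (n m r y : ℕ) : ℝ :=
  ((r - 1).choose (y - 1) * (n - r).choose (m - y) : ℝ) / ((n - 1).choose (m - 1) : ℝ)

/-- The per-pool nomination probability q_r with quota k_q = km/n:
full nomination for positions ≤ ⌊k_q⌋, fractional mass k_q − ⌊k_q⌋ at ⌊k_q⌋+1. -/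
noncomputable def nomProb (n m k r : ℕ) : ℝ :=
  let kq : ℝ := (k * m : ℝ) / (n : ℝ)
  (∑ y ∈ Finset.Icc 1 ⌊kq⌋₊, poolProb n m r y)
    + (kq - (⌊kq⌋₊ : ℝ)) * poolProb n m r (⌊kq⌋₊ + 1)


lemma keyId (a b M : ℕ) : ∀ t, t + 1 ≤ M →
    ∑ j ∈ Finset.range (t+1), a.choose j * (b+1).choose (M - j)
    = (∑ j ∈ Finset.range (t+1), (a+1).choose j * b.choose (M - j))
      + a.choose t * b.choose (M - t - 1) := by
  intro t
  induction t with
  | zero =>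
    intro h
    obtain ⟨s, rfl⟩ : ∃ s, M = s + 1 := ⟨M - 1, by omega⟩
    simp [Nat.choose_succ_succ' b s]
    ring
  | succ t ih =>
    intro h
    have ht : t + 1 ≤ M := by omega
    obtain ⟨u, hu⟩ : ∃ u, M = t + 2 + u := ⟨M - (t+2), by omega⟩
    subst hu
    rw [Finset.sum_range_succ,
      Finset.sum_range_succ (f := fun j => (a+1).choose j * b.choose (t + 2 + u - j)) (n := t+1),
      ih ht]
    have e1 : t + 2 + u - (t + 1) = u + 1 := by omega
    have e2 : t + 2 + u - t - 1 = u + 1 := by omega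
    have e3 : u + 1 - 1 = u := by omega
    rw [e1, e2, e3, Nat.choose_succ_succ' b u, Nat.choose_succ_succ' a t]
    ring

lemma mono_nat (a b M t : ℕ) (ht : t ≤ M + 1) :
    ∑ j ∈ Finset.range t, (a+1).choose j * b.choose (M - j)
    ≤ ∑ j ∈ Finset.range t, a.choose j * (b+1).choose (M - j) := by
  rcases Nat.lt_or_ge t (M + 1) with h | h
  · rcases t with _ | s
    · simp
    · rw [keyId a b M s (by omega)]
      exact Nat.le_add_right _ _
  · have hte : t = M + 1 := le_antisymm ht h
    subst hte
    have h1 : ∑ j ∈ Finset.range (M+1), (a+1).choose j * b.choose (M - j) = ((a+1) + b).choose M := by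
      rw [Nat.add_choose_eq, Finset.Nat.sum_antidiagonal_eq_sum_range_succ_mk]
    have h2 : ∑ j ∈ Finset.range (M+1), a.choose j * (b+1).choose (M - j) = (a + (b+1)).choose M := by
      rw [Nat.add_choose_eq, Finset.Nat.sum_antidiagonal_eq_sum_range_succ_mk]
    rw [h1, h2, show (a+1) + b = a + (b+1) by omega]

/-- numerator sum -/
def Asum (n m r t : ℕ) : ℕ := ∑ y ∈ Finset.Icc 1 t, (r-1).choose (y-1) * (n-r).choose (m-y)

lemma Asum_eq_range (n m r t : ℕ) :
    Asum n m r t = ∑ j ∈ Finset.range t, (r-1).choose j * (n-r).choose (m - 1 - j) := by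
  unfold Asum
  rw [show Finset.Icc 1 t = Finset.map ⟨fun j => j + 1, add_left_injective 1⟩ (Finset.range t) by
      ext x
      simp only [Finset.mem_Icc, Finset.mem_map, Finset.mem_range, Function.Embedding.coeFn_mk]
      constructor
      · rintro ⟨h1, h2⟩; exact ⟨x - 1, by omega, by omega⟩
      · rintro ⟨j, hj, rfl⟩; omega,
    Finset.sum_map]
  apply Finset.sum_congr rfl
  intro j _
  simp only [Function.Embedding.coeFn_mk]
  congr 2 <;> omega

lemma Asum_step (n m r t : ℕ) (hr1 : 1 ≤ r) (hrn : r < n) (hm1 : 1 ≤ m) (ht : t ≤ m) :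
    Asum n m (r+1) t ≤ Asum n m r t := by
  rw [Asum_eq_range, Asum_eq_range]
  have e1 : r + 1 - 1 = (r - 1) + 1 := by omega
  have e2 : n - (r + 1) = n - r - 1 := by omega
  have e3 : n - r = (n - r - 1) + 1 := by omega
  rw [e1, e2]
  calc ∑ j ∈ Finset.range t, ((r-1)+1).choose j * (n - r - 1).choose (m - 1 - j)
      ≤ ∑ j ∈ Finset.range t, (r-1).choose j * ((n - r - 1)+1).choose (m - 1 - j) :=
        mono_nat (r-1) (n-r-1) (m-1) t (by omega)
    _ = _ := by rw [← e3]

lemma Asum_mono (n m r r' t : ℕ) (hr1 : 1 ≤ r) (hrr' : r ≤ r') (hr'n : r' ≤ n)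
    (hm1 : 1 ≤ m) (ht : t ≤ m) :
    Asum n m r' t ≤ Asum n m r t := by
  induction r' , hrr' using Nat.le_induction with
  | base => exact le_refl _
  | succ s hs ih =>
    exact le_trans (Asum_step n m s t (by omega) (by omega) hm1 ht) (ih (by omega))


lemma sum_poolProb_eq (n m r t : ℕ) :
    ∑ y ∈ Finset.Icc 1 t, poolProb n m r y = (Asum n m r t : ℝ) / ((n-1).choose (m-1) : ℝ) := by
  unfold poolProb Asum
  push_cast
  rw [Finset.sum_div]

lemma sum_poolProb_mono (n m r r' t : ℕ) (hr1 : 1 ≤ r) (hrr' : r ≤ r') (hr'n : r' ≤ n)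
    (hm1 : 1 ≤ m) (hmn : m ≤ n) (ht : t ≤ m) :
    ∑ y ∈ Finset.Icc 1 t, poolProb n m r' y ≤ ∑ y ∈ Finset.Icc 1 t, poolProb n m r y := by
  rw [sum_poolProb_eq, sum_poolProb_eq]
  have hC : (0:ℝ) < ((n-1).choose (m-1) : ℝ) := by
    exact_mod_cast Nat.choose_pos (by omega)
  have hA := Asum_mono n m r r' t hr1 hrr' hr'n hm1 ht
  gcongr
  all_goals exact_mod_cast hA

/-- the nomination probability q_r is non-increasing in r. -/
theorem nomProb_antitone (n m k r r' : ℕ)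
    (hk0 : 0 < k) (hkn : k < n) (hm1 : 1 ≤ m) (hmn : m ≤ n)
    (hr1 : 1 ≤ r) (hrr' : r ≤ r') (hr'n : r' ≤ n) :
    nomProb n m k r' ≤ nomProb n m k r := by
  unfold nomProb
  dsimp only
  set kq : ℝ := (k * m : ℝ) / (n : ℝ) with hkq
  set t := ⌊kq⌋₊ with htdef
  set α : ℝ := kq - (t : ℝ) with hα
  have hn0 : (0:ℝ) < n := by exact_mod_cast (by omega : 0 < n)
  have hkq0 : 0 ≤ kq := by positivity
  have hα0 : 0 ≤ α := by
    have := Nat.floor_le hkq0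
    simp only [hα]; linarith
  have hα1 : α ≤ 1 := by
    have := Nat.lt_floor_add_one kq
    simp only [hα]; push_cast at this ⊢; linarith
  have htm : t < m := by
    rw [htdef]
    rw [Nat.floor_lt hkq0]
    rw [hkq, div_lt_iff₀ hn0]
    have : (k:ℝ) < n := by exact_mod_cast hkn
    have hm0 : (0:ℝ) < m := by exact_mod_cast hm1
    nlinarith
  have h1 : ∑ y ∈ Finset.Icc 1 t, poolProb n m r' y ≤ ∑ y ∈ Finset.Icc 1 t, poolProb n m r y :=
    sum_poolProb_mono n m r r' t hr1 hrr' hr'n hm1 hmn (by omega)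
  have h2 : ∑ y ∈ Finset.Icc 1 (t+1), poolProb n m r' y
      ≤ ∑ y ∈ Finset.Icc 1 (t+1), poolProb n m r y :=
    sum_poolProb_mono n m r r' (t+1) hr1 hrr' hr'n hm1 hmn (by omega)
  rw [Finset.sum_Icc_succ_top (by omega) , Finset.sum_Icc_succ_top (by omega)] at h2
  have key1 := mul_le_mul_of_nonneg_left h1 (by linarith : (0:ℝ) ≤ 1 - α)
  have key2 := mul_le_mul_of_nonneg_left h2 hα0
  nlinarith [key1, key2]
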